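/- arXiv:2005.02596 — 2 statements merged into one kernel-verified Lean document; each statement's English description precedes it below -/
import Mathlib

section
/- Suppose f is a transduction that is invariant under permutations, u, v are data words, and π is any permutation that is the identity on the set of data values that are f-influencing in u. Then f(π(u)̲ | v) = f(u̲ | v) and aifl_f(u) = aifl_f(π(u)). -/
namespace SSRT

/-- Elements of a factored output: either a retained output triple
(letter, data value, origin — integer origins allow shifting by `z`),
or one of the placeholder marks `(*,*,left)`, `(*,*,middle)`, `(*,*,right)`. -/
inductive FOElem (G D : Type) where
  | tri (g : G) (d : D) (o : ℤ)
  | left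
  | middle
  | right
  deriving DecidableEq

namespace FOElem

def isTri {G D : Type} : FOElem G D → Bool
  | .tri _ _ _ => true
  | _ => false

def isMark {G D : Type} (e : FOElem G D) : Bool := !e.isTri

end FOElem

/-- Data words over the input alphabet `A` with data from `D`. -/
abbrev DataWord (A D : Type) := List (A × D)

/-- Data words with origin information over the output alphabet `G`;
positions of the input are numbered 1,…,n. -/
abbrev OutWord (G D : Type) := List (G × D × ℕ)

/-- A transduction. -/
abbrev Transduction (A G D : Type) := DataWord A D → OutWord G D

variable {A G D : Type}

/-- Apply a permutation of data values to a data word. -/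
def permW (π : Equiv.Perm D) (u : DataWord A D) : DataWord A D :=
  u.map fun p => (p.1, π p.2)

/-- Apply a permutation of data values to an output word. -/
def permOut (π : Equiv.Perm D) (w : OutWord G D) : OutWord G D :=
  w.map fun t => (t.1, π t.2.1, t.2.2)

/-- Apply a permutation of data values to a factored output
(placeholder marks are unchanged). -/
def permFO (π : Equiv.Perm D) : List (FOElem G D) → List (FOElem G D) :=
  List.map fun e => match e with
    | .tri g d o => .tri g (π d) o
    | .left => .left
    | .middle => .middle
    | .right => .right

/-- Shift the origin of every retained triple by `z`. -/
def foShift (z : ℤ) : List (FOElem G D) → List (FOElem G D) :=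
  List.map fun e => match e with
    | .tri g d o => .tri g d (o + z)
    | .left => .left
    | .middle => .middle
    | .right => .right

/-- `f` is invariant under permutations. -/
def PermInvariant (f : Transduction A G D) : Prop :=
  ∀ (π : Equiv.Perm D) (u : DataWord A D), f (permW π u) = permOut π (f u)

/-- `f` is without data peeking: every data value output from origin `o`
already occurs in the input at some position `≤ o`. -/
def NoDataPeeking (f : Transduction A G D) : Prop :=
  ∀ (w : DataWord A D) (t : G × D × ℕ), t ∈ f w →
    ∃ (i : ℕ) (a : A), w[i]? = some (a, t.2.1) ∧ i + 1 ≤ t.2.2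

/-- `f` has linear blow up. -/
def LinearBlowUp (f : Transduction A G D) : Prop :=
  ∃ K : ℕ, ∀ (w : DataWord A D) (o : ℕ), 1 ≤ o → o ≤ w.length →
    ((f w).filter fun t => t.2.2 == o).length ≤ K

variable [DecidableEq G] [DecidableEq D]

/-- Merge consecutive occurrences of equal placeholder marks into one. -/
def collapse : List (FOElem G D) → List (FOElem G D)
  | [] => []
  | [a] => [a]
  | a :: b :: rest =>
      if a = b ∧ a.isMark then collapse (b :: rest)
      else a :: collapse (b :: rest)

/-- The factored output `f(u̲ ∣ v)`. -/
def leftFac (f : Transduction A G D) (u v : DataWord A D) : List (FOElem G D) :=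
  collapse ((f (u ++ v)).map fun t =>
    if t.2.2 ≤ u.length then FOElem.left else FOElem.tri t.1 t.2.1 (t.2.2 : ℤ))

/-- The factored output `f(u ∣ v̲)`. -/
def rightFac (f : Transduction A G D) (u v : DataWord A D) : List (FOElem G D) :=
  collapse ((f (u ++ v)).map fun t =>
    if u.length < t.2.2 then FOElem.right else FOElem.tri t.1 t.2.1 (t.2.2 : ℤ))

/-- The factored output `f(u̲ ∣ v ∣ w̲)`. -/
def threeFac (f : Transduction A G D) (u v w : DataWord A D) : List (FOElem G D) :=
  collapse ((f (u ++ v ++ w)).map fun t =>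
    if t.2.2 ≤ u.length then FOElem.left
    else if t.2.2 ≤ u.length + v.length then FOElem.tri t.1 t.2.1 (t.2.2 : ℤ)
    else FOElem.right)

/-- The factored output `f(u̲ ∣ v̲ ∣ w̲)`. -/
def allFac (f : Transduction A G D) (u v w : DataWord A D) : List (FOElem G D) :=
  collapse ((f (u ++ v ++ w)).map fun t =>
    if t.2.2 ≤ u.length then FOElem.left
    else if t.2.2 ≤ u.length + v.length then FOElem.middle
    else FOElem.right)

/-- `u[d/d']`: replace every occurrence of the data value `d` by `d'`. -/
def replaceD (u : DataWord A D) (d d' : D) : DataWord A D :=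
  u.map fun p => (p.1, if p.2 = d then d' else p.2)

/-- Isomorphism of data words: same length, same letters, and the same
equalities among the data values at the various positions. -/
def Iso (u u' : DataWord A D) : Prop :=
  u.length = u'.length ∧
  (∀ i : ℕ, u[i]?.map Prod.fst = u'[i]?.map Prod.fst) ∧
  (∀ i j : ℕ, (u[i]?.map Prod.snd = u[j]?.map Prod.snd) ↔
          (u'[i]?.map Prod.snd = u'[j]?.map Prod.snd))

/-- `d'` is a safe replacement for `d` in `u`. -/
def SafeRepl (d d' : D) (u : DataWord A D) : Prop := Iso (replaceD u d d') u

def OccursIn (d : D) (u : DataWord A D) : Prop := ∃ p ∈ u, p.2 = d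

/-- `d` is `f`-memorable in `u`. -/
def Memorable (f : Transduction A G D) (d : D) (u : DataWord A D) : Prop :=
  ∃ (v : DataWord A D) (d' : D), SafeRepl d d' u ∧
    leftFac f (replaceD u d d') v ≠ leftFac f u v

/-- `d` is `f`-vulnerable in `u`. -/
def Vulnerable (f : Transduction A G D) (d : D) (u : DataWord A D) : Prop :=
  ∃ (u' v : DataWord A D) (d' : D), ¬ OccursIn d u' ∧
    SafeRepl d d' (u ++ u' ++ v) ∧
    rightFac f (u ++ u') (replaceD v d d') ≠ rightFac f (u ++ u') v

/-- `d` is `f`-influencing in `u`. -/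
def Influencing (f : Transduction A G D) (d : D) (u : DataWord A D) : Prop :=
  Memorable f d u ∨ Vulnerable f d u

/-- The last occurrence of `d` in `u` is at (0-based) index `i`. -/
def IsLastOcc (u : DataWord A D) (d : D) (i : ℕ) : Prop :=
  (∃ a : A, u[i]? = some (a, d)) ∧ ∀ j : ℕ, i < j → ∀ p : A × D, u[j]? = some p → p.2 ≠ d

/-- `d` is fresher than `e` in `u`: the last occurrence of `d` in `u` is
strictly to the right of the last occurrence of `e`. -/
def Fresher (u : DataWord A D) (d e : D) : Prop :=
  ∃ i j : ℕ, IsLastOcc u d i ∧ IsLastOcc u e j ∧ j < i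

/-- `l` is the sequence of all `f`-influencing values of `u`, listed freshest
first: the `i`-th element (1-based) is the `i`-th `f`-influencing value of `u`.
(The paper writes this sequence in the reverse direction, as `d_m ⋯ d_1`.) -/
def IsIflSeq (f : Transduction A G D) (u : DataWord A D) (l : List D) : Prop :=
  (∀ d, d ∈ l ↔ Influencing f d u) ∧ l.Nodup ∧
  ∀ (i j : ℕ) (hi : i < l.length) (hj : j < l.length), i < j →
    Fresher u (l.get ⟨i, hi⟩) (l.get ⟨j, hj⟩)

/-- The type annotation of an influencing value. -/
inductive IflType where
  | vm | m | v
  deriving DecidableEq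

def HasIflType (f : Transduction A G D) (u : DataWord A D) (d : D) :
    IflType → Prop
  | .vm => Memorable f d u ∧ Vulnerable f d u
  | .m => Memorable f d u ∧ ¬ Vulnerable f d u
  | .v => Vulnerable f d u ∧ ¬ Memorable f d u

/-- `al` is `aifl_f(u)` (listed freshest first). -/
def IsAiflSeq (f : Transduction A G D) (u : DataWord A D)
    (al : List (D × IflType)) : Prop :=
  IsIflSeq f u (al.map Prod.fst) ∧ ∀ p ∈ al, HasIflType f u p.1 p.2

/-- The equivalence `u1 ≡_f u2`. -/
def FEquiv (f : Transduction A G D) (u1 u2 : DataWord A D) : Prop :=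
  ∃ π : Equiv.Perm D,
    (∀ v, foShift ((u1.length : ℤ) - (u2.length : ℤ))
        (leftFac f (permW π u2) v) = leftFac f u1 v) ∧
    (∀ al, IsAiflSeq f (permW π u2) al ↔ IsAiflSeq f u1 al) ∧
    (∀ u v1 v2, (rightFac f (u1 ++ u) v1 = rightFac f (u1 ++ u) v2) ↔
        (rightFac f (permW π u2 ++ u) v1 = rightFac f (permW π u2 ++ u) v2))

/-- `≡_f` has finitely many equivalence classes. -/
def FEquivFiniteIndex (f : Transduction A G D) : Prop :=
  ∃ S : Set (DataWord A D), S.Finite ∧ ∀ u, ∃ r ∈ S, FEquiv f r u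

/-- `E` is an equalizing scheme for `f` with associated sequence `δ 1, δ 2, ⋯`
(the value `δ 0` is irrelevant here): for every data word `u`, the `i`-th
`f`-influencing value of `E(u)(u)` is `δ i`. -/
def IsEqualizingSchemeWith (f : Transduction A G D)
    (E : DataWord A D → Equiv.Perm D) (δ : ℕ → D) : Prop :=
  ∀ (u : DataWord A D) (l : List D), IsIflSeq f (permW (E u) u) l →
    ∀ (i : ℕ) (h : i < l.length), l.get ⟨i, h⟩ = δ (i + 1)

def IsEqualizingScheme (f : Transduction A G D)
    (E : DataWord A D → Equiv.Perm D) : Prop :=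
  ∃ δ : ℕ → D, IsEqualizingSchemeWith f E δ

/-- `v1 ≡_f^E v2`. -/
def REquiv (f : Transduction A G D) (E : DataWord A D → Equiv.Perm D)
    (v1 v2 : DataWord A D) : Prop :=
  ∀ u, rightFac f (permW (E u) u) v1 = rightFac f (permW (E u) u) v2

/-- `≡_f^E` has finitely many equivalence classes. -/
def REquivFiniteIndex (f : Transduction A G D)
    (E : DataWord A D → Equiv.Perm D) : Prop :=
  ∃ S : Set (DataWord A D), S.Finite ∧ ∀ v, ∃ r ∈ S, REquiv f E r v

/-- The blocks of a factored output: the maximal infixes consisting of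
retained triples, in order. -/
def triBlocks (l : List (FOElem G D)) : List (List (FOElem G D)) :=
  (l.splitOnP fun e => !e.isTri).filter fun b => !b.isEmpty

/-- Helper for concretizing non-right blocks: walk `f(u̲ ∣ v̲ ∣ w̲)` and
substitute the `i`-th occurrence of the left mark by the `i`-th left block
(taken from `L`) and the `j`-th occurrence of the middle mark by the `j`-th
middle block (taken from `M`); right marks are turned into separators. -/
def annotateNR (L M : List (List (FOElem G D))) :
    List (FOElem G D) → ℕ → ℕ → List (Option (List (FOElem G D)))
  | [], _, _ => []
  | .left :: rest, i, j => some (L.getD i []) :: annotateNR L M rest (i + 1) j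
  | .middle :: rest, i, j => some (M.getD j []) :: annotateNR L M rest i (j + 1)
  | .right :: rest, i, j => none :: annotateNR L M rest i j
  | .tri g d o :: rest, i, j => some [.tri g d o] :: annotateNR L M rest i j

/-- The concretizations of the non-right blocks of `f(u̲ ∣ v̲ ∣ w̲)`, in order:
the concretization of a non-right block is the concatenation of the
concretizations of the left blocks (taken from `f(u ∣ v·w̲)`) and the middle
blocks (taken from `f(u̲ ∣ v ∣ w̲)`) occurring in it. -/
def concretizedNRBlocks (f : Transduction A G D) (u v w : DataWord A D) :
    List (List (FOElem G D)) :=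
  (((annotateNR (triBlocks (rightFac f u (v ++ w))) (triBlocks (threeFac f u v w))
        (allFac f u v w) 0 0).splitOnP fun o => o.isNone).filter
      fun grp => !grp.isEmpty).map fun grp => grp.reduceOption.flatten

/-- `π` tracks influencing values (relative to the sequence `δ`) on `w`:
the `i`-th `f`-influencing value of `w` is `π (δ i)`. -/
def TracksInfluencing (f : Transduction A G D) (δ : ℕ → D) (π : Equiv.Perm D)
    (w : DataWord A D) : Prop :=
  ∀ l, IsIflSeq f w l → ∀ (i : ℕ) (h : i < l.length), l.get ⟨i, h⟩ = π (δ (i + 1))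

end SSRT

open SSRT

set_option linter.unusedSectionVars false
set_option linter.unnecessarySeqFocus false

namespace SSRT

variable {A G D : Type} [DecidableEq G] [DecidableEq D]

/-- the element-wise action of `permFO` -/
def pfo (π : Equiv.Perm D) : FOElem G D → FOElem G D := fun e => match e with
  | .tri g d o => .tri g (π d) o
  | .left => .left
  | .middle => .middle
  | .right => .right

lemma permFO_eq_map (π : Equiv.Perm D) (l : List (FOElem G D)) :
    permFO π l = l.map (pfo π) := rfl

lemma pfo_injective (π : Equiv.Perm D) : Function.Injective (pfo (G := G) π) := by
  intro a b h
  cases a <;> cases b <;> simp [pfo] at h ⊢ <;>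
    aesop

lemma pfo_isMark (π : Equiv.Perm D) (e : FOElem G D) : (pfo π e).isMark = e.isMark := by
  cases e <;> rfl

lemma collapse_map {h : FOElem G D → FOElem G D} (hinj : Function.Injective h)
    (hm : ∀ e, (h e).isMark = e.isMark) :
    ∀ l : List (FOElem G D), collapse (l.map h) = (collapse l).map h
  | [] => rfl
  | [a] => rfl
  | a :: b :: rest => by
    have ih := collapse_map hinj hm (b :: rest)
    simp only [List.map_cons] at ih ⊢
    rw [collapse, collapse]
    by_cases hc : a = b ∧ a.isMark
    · rw [if_pos hc, if_pos (by exact ⟨by rw [hc.1], by rw [hm]; exact hc.2⟩)]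
      exact ih
    · rw [if_neg hc, if_neg (by
        rintro ⟨h1, h2⟩
        exact hc ⟨hinj h1, by rw [← hm a]; exact h2⟩)]
      simp only [List.map_cons]
      rw [← ih]

lemma permW_permW (σ τ : Equiv.Perm D) (u : DataWord A D) :
    permW σ (permW τ u) = permW (σ * τ) u := by
  simp [permW, List.map_map, Function.comp]

lemma permW_one (u : DataWord A D) : permW (1 : Equiv.Perm D) u = u := by
  simp [permW]

lemma permW_inv_permW (π : Equiv.Perm D) (u : DataWord A D) :
    permW π⁻¹ (permW π u) = u := by
  rw [permW_permW, inv_mul_cancel, permW_one]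

lemma length_permW (π : Equiv.Perm D) (u : DataWord A D) :
    (permW π u).length = u.length := List.length_map _

lemma permW_append (π : Equiv.Perm D) (u v : DataWord A D) :
    permW π (u ++ v) = permW π u ++ permW π v := List.map_append


lemma permFO_injective (π : Equiv.Perm D) :
    Function.Injective (permFO (G := G) π) := by
  have : permFO (G := G) (D := D) π = List.map (pfo π) := rfl
  rw [this]
  exact List.map_injective_iff.mpr (pfo_injective π)

lemma leftFac_perm (f : Transduction A G D) (hperm : PermInvariant f)
    (π : Equiv.Perm D) (u v : DataWord A D) :
    leftFac f (permW π u) (permW π v) = permFO π (leftFac f u v) := by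
  unfold leftFac
  rw [← permW_append, hperm, permFO_eq_map, ← collapse_map (pfo_injective π) (pfo_isMark π)]
  congr 1
  unfold permOut
  rw [List.map_map, List.map_map]
  apply List.map_congr_left
  intro t _
  by_cases h : t.2.2 ≤ u.length <;>
    simp [Function.comp, length_permW, h, pfo]

lemma rightFac_perm (f : Transduction A G D) (hperm : PermInvariant f)
    (π : Equiv.Perm D) (u v : DataWord A D) :
    rightFac f (permW π u) (permW π v) = permFO π (rightFac f u v) := by
  unfold rightFac
  rw [← permW_append, hperm, permFO_eq_map, ← collapse_map (pfo_injective π) (pfo_isMark π)]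
  congr 1
  unfold permOut
  rw [List.map_map, List.map_map]
  apply List.map_congr_left
  intro t _
  by_cases h : u.length < t.2.2 <;>
    simp [Function.comp, length_permW, h, pfo]


lemma Iso.refl (u : DataWord A D) : Iso u u := ⟨rfl, fun _ => rfl, fun _ _ => Iff.rfl⟩

lemma Iso.symm {u v : DataWord A D} (h : Iso u v) : Iso v u :=
  ⟨h.1.symm, fun i => (h.2.1 i).symm, fun i j => (h.2.2 i j).symm⟩

lemma Iso.trans {u v w : DataWord A D} (h : Iso u v) (h' : Iso v w) : Iso u w :=
  ⟨h.1.trans h'.1, fun i => (h.2.1 i).trans (h'.2.1 i),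
   fun i j => (h.2.2 i j).trans (h'.2.2 i j)⟩

lemma getElem?_permW (π : Equiv.Perm D) (u : DataWord A D) (i : ℕ) :
    (permW π u)[i]? = u[i]?.map (fun p => (p.1, π p.2)) := List.getElem?_map

lemma iso_permW (π : Equiv.Perm D) (u : DataWord A D) : Iso (permW π u) u := by
  refine ⟨length_permW π u, fun i => ?_, fun i j => ?_⟩
  · rw [getElem?_permW, Option.map_map]
    rfl
  · rw [getElem?_permW, getElem?_permW, Option.map_map, Option.map_map]
    have : (Prod.snd ∘ fun p : A × D => (p.1, π p.2)) = π ∘ Prod.snd := rfl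
    rw [this, ← Option.map_map, ← Option.map_map]
    exact (Option.map_injective π.injective).eq_iff

lemma iso_permW_iff {π : Equiv.Perm D} {a b : DataWord A D} :
    Iso (permW π a) (permW π b) ↔ Iso a b := by
  constructor
  · intro h
    exact ((iso_permW π a).symm.trans h).trans (iso_permW π b)
  · intro h
    exact ((iso_permW π a).trans h).trans (iso_permW π b).symm

lemma occursIn_iff_mem_map {d : D} {u : DataWord A D} :
    OccursIn d u ↔ d ∈ u.map Prod.snd := by
  simp [OccursIn, List.mem_map]

lemma replaceD_of_not_occ {u : DataWord A D} {d d' : D} (h : ¬ OccursIn d u) :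
    replaceD u d d' = u := by
  unfold replaceD
  rw [List.map_congr_left (fun p hp => ?_), List.map_id]
  have : p.2 ≠ d := fun he => h ⟨p, hp, he⟩
  simp [this]

lemma replaceD_eq_permW {u : DataWord A D} {d e : D} (h : ¬ OccursIn e u) :
    replaceD u d e = permW (Equiv.swap d e) u := by
  unfold replaceD permW
  apply List.map_congr_left
  intro p hp
  have hpe : p.2 ≠ e := fun heq => h ⟨p, hp, heq⟩
  by_cases hpd : p.2 = d
  · simp [hpd, Equiv.swap_apply_left]
  · simp [hpd, Equiv.swap_apply_of_ne_of_ne hpd hpe]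

lemma safeRepl_of_fresh {u : DataWord A D} {d e : D} (h : ¬ OccursIn e u) :
    SafeRepl d e u := by
  rw [SafeRepl, replaceD_eq_permW h]
  exact iso_permW _ _

lemma replaceD_permW (π : Equiv.Perm D) (u : DataWord A D) (d d' : D) :
    replaceD (permW π u) (π d) (π d') = permW π (replaceD u d d') := by
  unfold replaceD permW
  rw [List.map_map, List.map_map]
  apply List.map_congr_left
  intro p _
  by_cases hpd : p.2 = d
  · simp [Function.comp, hpd]
  · simp [Function.comp, hpd, π.injective.ne hpd]

lemma occursIn_permW {π : Equiv.Perm D} {d : D} {u : DataWord A D} :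
    OccursIn (π d) (permW π u) ↔ OccursIn d u := by
  unfold OccursIn permW
  constructor
  · rintro ⟨q, hq, hq2⟩
    rw [List.mem_map] at hq
    obtain ⟨p, hp, rfl⟩ := hq
    exact ⟨p, hp, π.injective hq2⟩
  · rintro ⟨p, hp, hp2⟩
    exact ⟨(p.1, π p.2), List.mem_map_of_mem hp, by rw [hp2]⟩

variable {f : Transduction A G D}

lemma memorable_occurs {d : D} {u : DataWord A D} (h : Memorable f d u) :
    OccursIn d u := by
  by_contra hocc
  obtain ⟨v, d', _, hne⟩ := h
  rw [replaceD_of_not_occ hocc] at hne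
  exact hne rfl

lemma not_memorable_leftFac {d d' : D} {u v : DataWord A D}
    (h : ¬ Memorable f d u) (hs : SafeRepl d d' u) :
    leftFac f (replaceD u d d') v = leftFac f u v := by
  by_contra hne
  exact h ⟨v, d', hs, hne⟩

lemma memorable_perm (hperm : PermInvariant f) (π : Equiv.Perm D) {d : D}
    {u : DataWord A D} (h : Memorable f d u) : Memorable f (π d) (permW π u) := by
  obtain ⟨v, d', hs, hne⟩ := h
  refine ⟨permW π v, π d', ?_, ?_⟩
  · rw [SafeRepl, replaceD_permW]
    exact iso_permW_iff.mpr hs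
  · rw [replaceD_permW, leftFac_perm f hperm, leftFac_perm f hperm]
    intro heq
    exact hne (permFO_injective π heq)

lemma memorable_perm_iff (hperm : PermInvariant f) (π : Equiv.Perm D) {d : D}
    {u : DataWord A D} : Memorable f (π d) (permW π u) ↔ Memorable f d u := by
  constructor
  · intro h
    have := memorable_perm hperm π⁻¹ h
    rwa [permW_inv_permW, Equiv.Perm.coe_inv, Equiv.symm_apply_apply] at this
  · exact memorable_perm hperm π

lemma vulnerable_perm (hperm : PermInvariant f) (π : Equiv.Perm D) {d : D}
    {u : DataWord A D} (h : Vulnerable f d u) : Vulnerable f (π d) (permW π u) := by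
  obtain ⟨u', v, d', hocc, hs, hne⟩ := h
  refine ⟨permW π u', permW π v, π d', ?_, ?_, ?_⟩
  · rw [occursIn_permW]
    exact hocc
  · rw [SafeRepl, ← permW_append, ← permW_append, replaceD_permW]
    exact iso_permW_iff.mpr hs
  · rw [replaceD_permW, ← permW_append, rightFac_perm f hperm, rightFac_perm f hperm]
    intro heq
    exact hne (permFO_injective π heq)

lemma vulnerable_perm_iff (hperm : PermInvariant f) (π : Equiv.Perm D) {d : D}
    {u : DataWord A D} : Vulnerable f (π d) (permW π u) ↔ Vulnerable f d u := by
  constructor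
  · intro h
    have := vulnerable_perm hperm π⁻¹ h
    rwa [permW_inv_permW, Equiv.Perm.coe_inv, Equiv.symm_apply_apply] at this
  · exact vulnerable_perm hperm π

lemma influencing_perm_iff (hperm : PermInvariant f) (π : Equiv.Perm D) {d : D}
    {u : DataWord A D} : Influencing f (π d) (permW π u) ↔ Influencing f d u :=
  or_congr (memorable_perm_iff hperm π) (vulnerable_perm_iff hperm π)

/-- data values occurring in `u`, as a finset -/
def valsD (u : DataWord A D) : Finset D := (u.map Prod.snd).toFinset

lemma occursIn_iff_valsD {d : D} {u : DataWord A D} :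
    OccursIn d u ↔ d ∈ valsD u := by
  rw [valsD, List.mem_toFinset]
  exact occursIn_iff_mem_map

/-- values of `u` moved by `π` -/
def badset (u : DataWord A D) (π : Equiv.Perm D) : Finset D :=
  (valsD u).filter (fun c => π c ≠ c)

lemma mem_badset {u : DataWord A D} {π : Equiv.Perm D} {c : D} :
    c ∈ badset u π ↔ OccursIn c u ∧ π c ≠ c := by
  rw [badset, Finset.mem_filter, ← occursIn_iff_valsD]

lemma permW_congr {σ τ : Equiv.Perm D} {u : DataWord A D}
    (h : ∀ c, OccursIn c u → σ c = τ c) : permW σ u = permW τ u := by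
  unfold permW
  apply List.map_congr_left
  intro p hp
  rw [h p.2 ⟨p, hp, rfl⟩]

lemma occursIn_permW' {σ : Equiv.Perm D} {c : D} {u : DataWord A D} :
    OccursIn c (permW σ u) ↔ OccursIn (σ⁻¹ c) u := by
  conv_lhs => rw [show c = σ (σ⁻¹ c) by simp]
  exact occursIn_permW

lemma lemF (hperm : PermInvariant f) :
    ∀ (n : ℕ) (u : DataWord A D) (π : Equiv.Perm D),
    (∀ d, Memorable f d u → π d = d) →
    (∀ c, OccursIn c u → π c ≠ c → ¬ OccursIn (π c) u) →
    (badset u π).card ≤ n →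
    ∀ v, leftFac f (permW π u) v = leftFac f u v := by
  intro n
  induction n with
  | zero =>
    intro u π hmem hside hcard v
    have hempty : badset u π = ∅ := Finset.card_eq_zero.mp (Nat.le_zero.mp hcard)
    have : permW π u = permW 1 u := by
      apply permW_congr
      intro c hc
      by_contra hne
      have : c ∈ badset u π := mem_badset.mpr ⟨hc, by simpa using hne⟩
      simp [hempty] at this
    rw [this, permW_one]
  | succ n ih =>
    intro u π hmem hside hcard v
    by_cases hbs : badset u π = ∅
    · have : permW π u = permW 1 u := by
        apply permW_congr
        intro c hc
        by_contra hne
        have : c ∈ badset u π := mem_badset.mpr ⟨hc, by simpa using hne⟩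
        simp [hbs] at this
      rw [this, permW_one]
    · obtain ⟨d, hd⟩ := Finset.nonempty_iff_ne_empty.mpr hbs
      obtain ⟨hdocc, hdne⟩ := mem_badset.mp hd
      obtain ⟨e, he_def⟩ : ∃ e, e = π d := ⟨π d, rfl⟩
      have he : ¬ OccursIn e u := he_def ▸ hside d hdocc hdne
      have hde : d ≠ e := fun h => hdne (he_def ▸ h.symm)
      obtain ⟨σ, hσ_def⟩ : ∃ σ, σ = Equiv.swap d e := ⟨_, rfl⟩
      obtain ⟨u₁, hu₁_def⟩ : ∃ u₁, u₁ = permW σ u := ⟨_, rfl⟩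
      obtain ⟨π₁, hπ₁_def⟩ : ∃ π₁, π₁ = π * σ := ⟨_, rfl⟩
      have hσσ : ∀ x, σ (σ x) = x := by
        intro x; rw [hσ_def, Equiv.swap_apply_self]
      have hσd : σ d = e := by rw [hσ_def, Equiv.swap_apply_left]
      have hσe : σ e = d := by rw [hσ_def, Equiv.swap_apply_right]
      have hσfix : ∀ x, x ≠ d → x ≠ e → σ x = x := by
        intro x h1 h2; rw [hσ_def]; exact Equiv.swap_apply_of_ne_of_ne h1 h2
      -- occurrences in u₁
      have hocc₁ : ∀ c, OccursIn c u₁ ↔ OccursIn (σ c) u := by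
        intro c
        rw [hu₁_def, occursIn_permW']
        rw [hσ_def, Equiv.swap_inv]
      -- step (a)
      have hstep : ∀ w, leftFac f u₁ w = leftFac f u w := by
        intro w
        have hnm : ¬ Memorable f d u := fun h => hdne (hmem d h)
        have : u₁ = replaceD u d e := by rw [hu₁_def, hσ_def, replaceD_eq_permW he]
        rw [this]
        exact not_memorable_leftFac hnm (safeRepl_of_fresh he)
      -- (b)
      have hperm_eq : permW π u = permW π₁ u₁ := by
        rw [hu₁_def, permW_permW, hπ₁_def, hσ_def, mul_assoc, Equiv.swap_mul_self, mul_one]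
      -- (c) memorable fixing for u₁, π₁
      have hmem₁ : ∀ c, Memorable f c u₁ → π₁ c = c := by
        intro c hc
        have hc' : Memorable f (σ c) u := by
          refine (memorable_perm_iff hperm σ (d := σ c) (u := u)).mp ?_
          rw [hσσ c, ← hu₁_def]
          exact hc
        have hπm : π (σ c) = σ c := hmem _ hc'
        have hmocc : OccursIn (σ c) u := memorable_occurs hc'
        have hmd : σ c ≠ d := by
          intro h; rw [h] at hπm; exact hdne (he_def ▸ hπm)
        have hme : σ c ≠ e := fun h => he (h ▸ hmocc)
        have hcm : c = σ c := by
          have := hσfix (σ c) hmd hme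
          rw [hσσ c] at this
          exact this
        rw [hπ₁_def, Equiv.Perm.mul_apply, hπm, ← hcm]
      -- (d')
      have hπ₁e : π₁ e = e := by
        rw [hπ₁_def, Equiv.Perm.mul_apply, hσe, ← he_def]
      -- generic analysis of occurring values of u₁
      have hanal : ∀ c, OccursIn c u₁ → π₁ c ≠ c →
          OccursIn c u ∧ c ≠ d ∧ c ≠ e ∧ π₁ c = π c := by
        intro c hc hne
        have hbocc : OccursIn (σ c) u := (hocc₁ c).mp hc
        have hbe : σ c ≠ e := fun h => he (h ▸ hbocc)
        by_cases hbd : σ c = d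
        · exfalso
          have hce : c = e := by
            have := congrArg σ hbd
            rw [hσσ c, hσd] at this
            exact this
          rw [hce] at hne
          exact hne hπ₁e
        · have hcb : c = σ c := by
            have := hσfix (σ c) hbd hbe
            rw [hσσ c] at this
            exact this
          have hcd : c ≠ d := hcb ▸ hbd
          have hce : c ≠ e := hcb ▸ hbe
          refine ⟨hcb ▸ hbocc, hcd, hce, ?_⟩
          rw [hπ₁_def, Equiv.Perm.mul_apply, hσfix c hcd hce]
      have hside₁ : ∀ c, OccursIn c u₁ → π₁ c ≠ c → ¬ OccursIn (π₁ c) u₁ := by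
        intro c hc hne
        obtain ⟨hcocc, hcd, hce, hπ₁c⟩ := hanal c hc hne
        rw [hπ₁c]
        intro hoccπc
        have h2 : OccursIn (σ (π c)) u := (hocc₁ (π c)).mp hoccπc
        by_cases h3 : π c = d
        · rw [h3, hσd] at h2
          exact he h2
        · by_cases h4 : π c = e
          · rw [he_def] at h4
            exact hcd (π.injective h4)
          · rw [hσfix _ h3 h4] at h2
            have hπcc : π c ≠ c := by
              rw [hπ₁c] at hne
              exact hne
            exact hside c hcocc hπcc h2
      -- (e) card bound
      have hsubset : badset u₁ π₁ ⊆ (badset u π).erase d := by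
        intro c hc
        obtain ⟨hcocc, hcne⟩ := mem_badset.mp hc
        obtain ⟨hcoccu, hcd, hce, hπ₁c⟩ := hanal c hcocc hcne
        rw [Finset.mem_erase]
        exact ⟨hcd, mem_badset.mpr ⟨hcoccu, by rw [← hπ₁c]; exact hcne⟩⟩
      have hcard₁ : (badset u₁ π₁).card ≤ n := by
        calc (badset u₁ π₁).card ≤ ((badset u π).erase d).card :=
              Finset.card_le_card hsubset
          _ = (badset u π).card - 1 := Finset.card_erase_of_mem hd
          _ ≤ n := by omega
      rw [hperm_eq, ih u₁ π₁ hmem₁ hside₁ hcard₁ v, hstep]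

lemma exists_rho [Infinite D] (B T : Finset D) (hTB : T ⊆ B) :
    ∃ ρ : Equiv.Perm D,
      (∀ x ∈ B, x ∉ T → ρ x = x) ∧ (∀ t ∈ T, ρ t ∉ B) ∧ ρ⁻¹ = ρ := by
  classical
  have hinf : ((↑B : Set D)ᶜ).Infinite := B.finite_toSet.infinite_compl
  let emb := Set.Infinite.natEmbedding _ hinf
  let φ : D → D := fun x => ↑(emb (T.toList.idxOf x))
  have hφB : ∀ x, φ x ∉ B := by
    intro x hx
    exact (emb (T.toList.idxOf x)).2 hx
  have hφinj : ∀ t₁ ∈ T, ∀ t₂ ∈ T, φ t₁ = φ t₂ → t₁ = t₂ := by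
    intro t₁ h₁ t₂ h₂ h
    have : T.toList.idxOf t₁ = T.toList.idxOf t₂ :=
      emb.injective (Subtype.ext h)
    exact (List.idxOf_inj (Finset.mem_toList.mpr h₁)).mp this
  let g : D → D := fun x =>
    if x ∈ T then φ x
    else if h : ∃ t ∈ T, φ t = x then h.choose else x
  have hg_eq : ∀ x, g x =
      if x ∈ T then φ x
      else if h : ∃ t ∈ T, φ t = x then h.choose else x := fun _ => rfl
  have hgT : ∀ t ∈ T, g t = φ t := by
    intro t ht
    rw [hg_eq, if_pos ht]
  have hgB : ∀ x ∈ B, x ∉ T → g x = x := by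
    intro x hx hxT
    have hno : ¬ ∃ t ∈ T, φ t = x := by
      rintro ⟨t, _, rfl⟩
      exact hφB t hx
    rw [hg_eq, if_neg hxT, dif_neg hno]
  have hinv : Function.Involutive g := by
    intro x
    by_cases hx : x ∈ T
    · rw [hgT x hx]
      have hφxT : φ x ∉ T := fun h => hφB x (hTB h)
      have hex : ∃ t ∈ T, φ t = φ x := ⟨x, hx, rfl⟩
      rw [hg_eq, if_neg hφxT, dif_pos hex]
      obtain ⟨ht, hφt⟩ := hex.choose_spec
      exact hφinj _ ht _ hx hφt
    · by_cases h2 : ∃ t ∈ T, φ t = x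
      · have hg1 : g x = h2.choose := by
          rw [hg_eq, if_neg hx, dif_pos h2]
        obtain ⟨ht, hφt⟩ := h2.choose_spec
        rw [hg1, hgT _ ht, hφt]
      · have hg1 : g x = x := by
          rw [hg_eq, if_neg hx, dif_neg h2]
        rw [hg1, hg1]
  refine ⟨hinv.toPerm g, ?_, ?_, ?_⟩
  · intro x hx hxT
    exact hgB x hx hxT
  · intro t ht
    have : hinv.toPerm g t = φ t := hgT t ht
    rw [this]
    exact hφB t
  · exact hinv.toPerm_symm

lemma leftFac_perm_of_fix_memorable [Infinite D] (hperm : PermInvariant f)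
    (u : DataWord A D) (π : Equiv.Perm D)
    (hπ : ∀ d, Memorable f d u → π d = d) :
    ∀ v, leftFac f (permW π u) v = leftFac f u v := by
  classical
  obtain ⟨ρ, hρfix, hρout, hρinv⟩ :=
    exists_rho (D := D) (valsD u ∪ (valsD u).image π) (badset u π)
      (fun c hc => Finset.mem_union_left _ (Finset.mem_filter.mp hc).1)
  have hρρ : ∀ x, ρ (ρ x) = x := by
    intro x
    have h : ρ⁻¹ (ρ x) = x := by simp
    rwa [hρinv] at h
  have hvB : ∀ c, OccursIn c u → c ∈ valsD u ∪ (valsD u).image π := by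
    intro c hc
    exact Finset.mem_union_left _ (occursIn_iff_valsD.mp hc)
  have hπB : ∀ c, OccursIn c u → π c ∈ valsD u ∪ (valsD u).image π := by
    intro c hc
    exact Finset.mem_union_right _
      (Finset.mem_image.mpr ⟨c, occursIn_iff_valsD.mp hc, rfl⟩)
  have hρfix' : ∀ c, OccursIn c u → π c = c → ρ c = c := by
    intro c hc hfix
    exact hρfix c (hvB c hc) (fun hT => (mem_badset.mp hT).2 hfix)
  -- Step 1: apply lemF to (u, ρ)
  have step1 : ∀ v, leftFac f (permW ρ u) v = leftFac f u v := by
    apply lemF hperm (badset u ρ).card u ρ ?_ ?_ le_rfl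
    · intro d hd
      exact hρfix' d (memorable_occurs hd) (hπ d hd)
    · intro c hc hne
      have hcT : c ∈ badset u π := by
        by_contra hT
        exact hne (hρfix c (hvB c hc) hT)
      intro hocc2
      exact hρout c hcT (hvB _ hocc2)
  -- Step 2: apply lemF to (permW ρ u, π * ρ)
  have hoccρ : ∀ c, OccursIn c (permW ρ u) ↔ OccursIn (ρ c) u := by
    intro c
    rw [occursIn_permW', hρinv]
  have step2 : ∀ v, leftFac f (permW (π * ρ) (permW ρ u)) v = leftFac f (permW ρ u) v := by
    apply lemF hperm (badset (permW ρ u) (π * ρ)).card (permW ρ u) (π * ρ) ?_ ?_ le_rfl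
    · -- memorable fixing
      intro c hc
      have hc' : Memorable f (ρ c) u := by
        refine (memorable_perm_iff hperm ρ (d := ρ c) (u := u)).mp ?_
        rw [hρρ c]
        exact hc
      have hm1 : π (ρ c) = ρ c := hπ _ hc'
      have hm2 : OccursIn (ρ c) u := memorable_occurs hc'
      have hm3 : ρ (ρ c) = ρ c := hρfix' _ hm2 hm1
      have hcm : c = ρ c := by
        conv_lhs => rw [← hρρ c, hm3]
      rw [Equiv.Perm.mul_apply, hm1]
      exact hcm.symm
    · -- side condition
      intro c hc hne
      have hbocc : OccursIn (ρ c) u := (hoccρ c).mp hc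
      by_cases hbT : ρ c ∈ badset u π
      · -- c = ρ b with b ∈ T; π (ρ c) might occur?
        have hπρc : (π * ρ) c = π (ρ c) := by
          rw [Equiv.Perm.mul_apply]
        rw [hπρc]
        intro hocc2
        have h2 : OccursIn (ρ (π (ρ c))) u := (hoccρ _).mp hocc2
        by_cases h3 : π (ρ c) ∈ badset u π
        · have := hρout _ h3
          exact this (hvB _ h2)
        · -- π (ρ c) ∉ T but π (ρ c) ∈ B
          have hπB' : π (ρ c) ∈ valsD u ∪ (valsD u).image π := hπB _ hbocc
          have hfix2 : ρ (π (ρ c)) = π (ρ c) := hρfix _ hπB' h3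
          rw [hfix2] at h2
          -- π (ρ c) occurs in u and π (π (ρ c)) ≠ π (ρ c), so π (ρ c) ∈ badset u π
          have : π (ρ c) ∈ badset u π := by
            apply mem_badset.mpr
            refine ⟨h2, ?_⟩
            intro heq
            have : π (ρ c) = ρ c := π.injective heq
            exact (mem_badset.mp hbT).2 this
          exact h3 this
      · -- ρ c ∉ T: then ρ (ρ c) = ρ c, c = ρ c, π c = c, vacuous
        exfalso
        have hfix2 : ρ (ρ c) = ρ c := hρfix _ (hvB _ hbocc) hbT
        have hcb : c = ρ c := by
          conv_lhs => rw [← hρρ c, hfix2]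
        have hπc : π (ρ c) = ρ c := by
          by_contra hne2
          exact hbT (mem_badset.mpr ⟨hbocc, hne2⟩)
        apply hne
        rw [Equiv.Perm.mul_apply, hπc, ← hcb]
  intro v
  have hfinal : permW (π * ρ) (permW ρ u) = permW π u := by
    rw [permW_permW, mul_assoc, show ρ * ρ = 1 from Equiv.ext fun x => hρρ x, mul_one]
  rw [← hfinal, step2, step1]

lemma occAt_perm (π : Equiv.Perm D) (u : DataWord A D) (d : D) (i : ℕ) :
    (∃ a, (permW π u)[i]? = some (a, π d)) ↔ (∃ a, u[i]? = some (a, d)) := by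
  rw [getElem?_permW]
  cases h : u[i]? with
  | none => simp
  | some p =>
    simp only [Option.map_some, Option.some.injEq]
    constructor
    · rintro ⟨a, ha⟩
      refine ⟨p.1, ?_⟩
      have h1 : p.1 = a := congrArg Prod.fst ha
      have h2 : π p.2 = π d := congrArg Prod.snd ha
      have h3 : p.2 = d := π.injective h2
      rw [← h3]
    · rintro ⟨a, ha⟩
      refine ⟨a, ?_⟩
      have h1 : p.1 = a := congrArg Prod.fst ha
      have h2 : p.2 = d := congrArg Prod.snd ha
      rw [← h1, ← h2]

lemma isLastOcc_perm (π : Equiv.Perm D) (u : DataWord A D) (d : D) (i : ℕ) :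
    IsLastOcc (permW π u) (π d) i ↔ IsLastOcc u d i := by
  unfold IsLastOcc
  rw [occAt_perm]
  apply and_congr_right'
  constructor
  · intro h j hj p hp
    intro hpd
    have : (permW π u)[j]? = some (p.1, π p.2) := by
      rw [getElem?_permW, hp]
      rfl
    exact h j hj (p.1, π p.2) this (by rw [hpd])
  · intro h j hj q hq
    rw [getElem?_permW] at hq
    cases hp : u[j]? with
    | none => rw [hp] at hq; simp at hq
    | some p =>
      rw [hp] at hq
      simp only [Option.map_some, Option.some.injEq] at hq
      intro hqd
      rw [← hq] at hqd
      have : p.2 = d := π.injective hqd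
      exact h j hj p hp this

lemma fresher_perm (π : Equiv.Perm D) (u : DataWord A D) (d e : D) :
    Fresher (permW π u) (π d) (π e) ↔ Fresher u d e := by
  unfold Fresher
  constructor
  · rintro ⟨i, j, h1, h2, h3⟩
    exact ⟨i, j, (isLastOcc_perm π u d i).mp h1, (isLastOcc_perm π u e j).mp h2, h3⟩
  · rintro ⟨i, j, h1, h2, h3⟩
    exact ⟨i, j, (isLastOcc_perm π u d i).mpr h1, (isLastOcc_perm π u e j).mpr h2, h3⟩

lemma influencing_all_iff (hperm : PermInvariant f) {u : DataWord A D}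
    {π : Equiv.Perm D} (hπ : ∀ d, Influencing f d u → π d = d) (d : D) :
    Influencing f d (permW π u) ↔ Influencing f d u := by
  constructor
  · intro h
    have h1 : Influencing f (π⁻¹ d) u := by
      have := influencing_perm_iff hperm π (d := π⁻¹ d) (u := u)
      rw [Equiv.Perm.coe_inv, Equiv.apply_symm_apply] at this
      exact this.mp h
    have h2 : π (π⁻¹ d) = π⁻¹ d := hπ _ h1
    rw [Equiv.Perm.coe_inv, Equiv.apply_symm_apply] at h2
    rw [h2]
    exact h1
  · intro h
    have h2 : π d = d := hπ d h
    have := (influencing_perm_iff hperm π (d := d) (u := u)).mpr h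
    rwa [h2] at this

lemma aifl_dir (hperm : PermInvariant f) {u : DataWord A D} {π : Equiv.Perm D}
    (hπ : ∀ d, Influencing f d u → π d = d) (al : List (D × IflType))
    (h : IsAiflSeq f u al) : IsAiflSeq f (permW π u) al := by
  obtain ⟨⟨hmem, hnodup, hfresh⟩, htypes⟩ := h
  have hfix : ∀ d ∈ al.map Prod.fst, π d = d := by
    intro d hd
    exact hπ d ((hmem d).mp hd)
  refine ⟨⟨?_, hnodup, ?_⟩, ?_⟩
  · intro d
    rw [influencing_all_iff hperm hπ]
    exact hmem d
  · intro i j hi hj hij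
    have h1 := hfresh i j hi hj hij
    have hd1 : π ((al.map Prod.fst).get ⟨i, hi⟩) = (al.map Prod.fst).get ⟨i, hi⟩ :=
      hfix _ (List.get_mem _ _)
    have hd2 : π ((al.map Prod.fst).get ⟨j, hj⟩) = (al.map Prod.fst).get ⟨j, hj⟩ :=
      hfix _ (List.get_mem _ _)
    have := (fresher_perm π u ((al.map Prod.fst).get ⟨i, hi⟩)
      ((al.map Prod.fst).get ⟨j, hj⟩)).mpr h1
    rwa [hd1, hd2] at this
  · intro p hp
    have hpfix : π p.1 = p.1 := hfix p.1 (List.mem_map_of_mem hp)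
    have htype := htypes p hp
    have hmemiff : Memorable f p.1 (permW π u) ↔ Memorable f p.1 u := by
      have := memorable_perm_iff hperm π (d := p.1) (u := u)
      rwa [hpfix] at this
    have hvuliff : Vulnerable f p.1 (permW π u) ↔ Vulnerable f p.1 u := by
      have := vulnerable_perm_iff hperm π (d := p.1) (u := u)
      rwa [hpfix] at this
    cases hty : p.2 with
    | vm =>
      rw [hty] at htype
      exact ⟨hmemiff.mpr htype.1, hvuliff.mpr htype.2⟩
    | m =>
      rw [hty] at htype
      exact ⟨hmemiff.mpr htype.1, fun hv => htype.2 (hvuliff.mp hv)⟩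
    | v =>
      rw [hty] at htype
      exact ⟨hvuliff.mpr htype.1, fun hm => htype.2 (hmemiff.mp hm)⟩

end SSRT

/-- Lemma 25: permuting a prefix without touching its
influencing values changes neither the left-factored outputs nor `aifl`. -/
theorem nonIfl_permutable_prefix
    {D A G : Type} [DecidableEq D] [Infinite D] [DecidableEq G]
    [Fintype A] [Fintype G]
    (f : Transduction A G D) (hperm : PermInvariant f)
    (u : DataWord A D) (π : Equiv.Perm D)
    (hπ : ∀ d : D, Influencing f d u → π d = d) :
    (∀ v : DataWord A D, leftFac f (permW π u) v = leftFac f u v) ∧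
    (∀ al : List (D × IflType),
      IsAiflSeq f u al ↔ IsAiflSeq f (permW π u) al) := by
  constructor
  · exact leftFac_perm_of_fix_memorable hperm u π (fun d hd => hπ d (Or.inl hd))
  · intro al
    constructor
    · exact aifl_dir hperm hπ al
    · intro h
      have hπ' : ∀ d, Influencing f d (permW π u) → π⁻¹ d = d := by
        intro d hd
        have h1 := (influencing_all_iff hperm hπ d).mp hd
        have h2 := hπ d h1
        rw [← h2, Equiv.Perm.coe_inv, Equiv.symm_apply_apply]
        exact h2.symm
      have := aifl_dir hperm hπ' al h
      rwa [permW_inv_permW] at this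
end

section
/- Suppose f is a transduction that is invariant under permutations and without data peeking, u, v are data words, and π is any permutation that is the identity on the set of data values that are f-vulnerable in u. Then f(u | π(v)̲) = f(u | v̲). -/
namespace SSRT

section Aux

variable {A G D : Type} [DecidableEq G] [DecidableEq D]

/-- Apply a list of replacements to a single data value. -/
def chainV (pr : List (D × D)) (a : D) : D :=
  pr.foldl (fun a p => if a = p.1 then p.2 else a) a

/-- Apply a list of replacements to a data word. -/
def chainW (pr : List (D × D)) (x : DataWord A D) : DataWord A D :=
  pr.foldl (fun w p => replaceD w p.1 p.2) x

lemma chainV_nil (a : D) : chainV [] a = a := rfl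

lemma chainV_cons (p : D × D) (pr : List (D × D)) (a : D) :
    chainV (p :: pr) a = chainV pr (if a = p.1 then p.2 else a) := rfl

lemma chainW_nil (x : DataWord A D) : chainW ([] : List (D × D)) x = x := rfl

lemma chainW_cons (p : D × D) (pr : List (D × D)) (x : DataWord A D) :
    chainW (p :: pr) x = chainW pr (replaceD x p.1 p.2) := rfl

lemma chainW_eq_map (pr : List (D × D)) (x : DataWord A D) :
    chainW pr x = x.map fun q => (q.1, chainV pr q.2) := by
  induction pr generalizing x with
  | nil => simp [chainW_nil, chainV_nil]
  | cons p pr ih =>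
      rw [chainW_cons, ih]
      simp only [replaceD, List.map_map]
      apply List.map_congr_left
      intro q _
      simp [chainV_cons]

lemma chainV_of_notmem (pr : List (D × D)) (a : D)
    (h : ∀ p ∈ pr, p.1 ≠ a) : chainV pr a = a := by
  induction pr with
  | nil => rfl
  | cons p pr ih =>
      rw [chainV_cons, if_neg (fun hh => h p (by simp) (by simp [hh]))]
      exact ih fun q hq => h q (by simp [hq])

lemma chainV_perm (π : Equiv.Perm D) :
    ∀ (ds es : List D), ds.length = es.length →
    (∀ e ∈ es, e ∉ ds) →
    (∀ e ∈ es, ∀ d ∈ ds, π d ≠ e) →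
    ∀ a : D, (a ∉ ds → π a = a) →
    chainV (ds.zip es) a = chainV ((ds.map π).zip es) (π a) := by
  intro ds
  induction ds with
  | nil =>
      intro es _ _ _ a ha
      exact (ha List.not_mem_nil).symm
  | cons d ds ih =>
      intro es hlen hf1 hf2 a ha
      cases es with
      | nil => simp at hlen
      | cons e es =>
          simp only [List.zip_cons_cons, List.map_cons, chainV_cons]
          by_cases hd : a = d
          · subst hd
            rw [if_pos rfl, if_pos rfl]
            have hL : chainV (ds.zip es) e = e := by
              apply chainV_of_notmem
              intro p hp hh
              obtain ⟨hp1, _⟩ := List.of_mem_zip hp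
              exact hf1 e (by simp) (by simp [hh ▸ hp1])
            have hR : chainV ((ds.map π).zip es) e = e := by
              apply chainV_of_notmem
              intro p hp
              obtain ⟨hp1, _⟩ := List.of_mem_zip hp
              obtain ⟨d', hd', hde⟩ := List.mem_map.mp hp1
              rw [← hde]
              exact hf2 e (by simp) d' (by simp [hd'])
            rw [hL, hR]
          · rw [if_neg hd, if_neg (fun hh => hd (π.injective hh))]
            refine ih es (by simpa using hlen)
              (fun e' he' => fun hm => hf1 e' (by simp [he']) (by simp [hm]))
              (fun e' he' d' hd' => hf2 e' (by simp [he']) d' (by simp [hd']))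
              a (fun hm => ha (by simp; tauto))

lemma occursIn_iff (c : D) (w : DataWord A D) :
    OccursIn c w ↔ c ∈ w.map Prod.snd := by
  constructor
  · rintro ⟨p, hp, rfl⟩; exact List.mem_map.mpr ⟨p, hp, rfl⟩
  · intro h
    obtain ⟨p, hp, rfl⟩ := List.mem_map.mp h
    exact ⟨p, hp, rfl⟩

lemma safe_of_fresh (d e : D) (w : DataWord A D) (he : ¬ OccursIn e w) :
    SafeRepl d e w := by
  have hmem : ∀ c, c ∈ w.map Prod.snd → c ≠ e := by
    intro c hc hce
    exact he ((occursIn_iff e w).mpr (hce ▸ hc))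
  refine ⟨by simp [replaceD], ?_, ?_⟩
  · intro i
    simp only [replaceD, List.getElem?_map]
    cases w[i]? <;> simp
  · intro i j
    simp only [replaceD, List.getElem?_map]
    have key : ∀ oi oj : Option (A × D),
        (∀ p, oi = some p → p.2 ∈ w.map Prod.snd) →
        (∀ p, oj = some p → p.2 ∈ w.map Prod.snd) →
        ((Option.map (fun p : A × D => (p.1, if p.2 = d then e else p.2)) oi).map Prod.snd =
         (Option.map (fun p : A × D => (p.1, if p.2 = d then e else p.2)) oj).map Prod.snd ↔
         oi.map Prod.snd = oj.map Prod.snd) := by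
      intro oi oj hi hj
      cases oi with
      | none => cases oj <;> simp
      | some p =>
          cases oj with
          | none => simp
          | some q =>
              simp only [Option.map_some, Option.some.injEq]
              have hpw : p.2 ∈ w.map Prod.snd := hi p rfl
              have hqw : q.2 ∈ w.map Prod.snd := hj q rfl
              constructor
              · intro hh
                by_cases hp : p.2 = d <;> by_cases hq : q.2 = d <;>
                  simp [hp, hq] at hh ⊢
                · exact absurd hh.symm (hmem q.2 hqw)
                · exact absurd hh (hmem p.2 hpw)
                · exact hh
              · intro hh; simp [hh]
    exact key w[i]? w[j]?
      (fun p hp => List.mem_map.mpr ⟨p, List.mem_of_getElem? hp, rfl⟩)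
      (fun p hp => List.mem_map.mpr ⟨p, List.mem_of_getElem? hp, rfl⟩)

lemma occursIn_replaceD {c : D} (d e : D) (x : DataWord A D)
    (h : OccursIn c (replaceD x d e)) : c = e ∨ OccursIn c x := by
  obtain ⟨p, hp, hp2⟩ := h
  simp only [replaceD, List.mem_map] at hp
  obtain ⟨q, hq, rfl⟩ := hp
  simp only at hp2
  by_cases hqd : q.2 = d
  · left; simpa [hqd] using hp2.symm
  · right; exact ⟨q, hq, by simpa [hqd] using hp2⟩

lemma occursIn_append {c : D} {x y : DataWord A D} :
    OccursIn c (x ++ y) ↔ OccursIn c x ∨ OccursIn c y := by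
  constructor
  · rintro ⟨p, hp, rfl⟩
    rcases List.mem_append.mp hp with h | h
    · exact Or.inl ⟨p, h, rfl⟩
    · exact Or.inr ⟨p, h, rfl⟩
  · rintro (⟨p, hp, rfl⟩ | ⟨p, hp, rfl⟩)
    · exact ⟨p, List.mem_append.mpr (Or.inl hp), rfl⟩
    · exact ⟨p, List.mem_append.mpr (Or.inr hp), rfl⟩

lemma step_nonvul (f : Transduction A G D) (u x : DataWord A D) (d e : D)
    (hnv : ¬ Vulnerable f d u) (hsafe : SafeRepl d e (u ++ x)) :
    rightFac f u (replaceD x d e) = rightFac f u x := by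
  by_contra h
  exact hnv ⟨[], x, e, by simp [OccursIn], by simpa using hsafe, by simpa using h⟩

lemma rightFac_chain (f : Transduction A G D) (u : DataWord A D) :
    ∀ (pr : List (D × D)) (x : DataWord A D),
    (∀ p ∈ pr, ¬ Vulnerable f p.1 u) →
    (∀ p ∈ pr, ¬ OccursIn p.2 (u ++ x)) →
    (pr.map Prod.snd).Nodup →
    rightFac f u (chainW pr x) = rightFac f u x := by
  intro pr
  induction pr with
  | nil => intro x _ _ _; rw [chainW_nil]
  | cons p pr ih =>
      intro x h1 h2 h3
      rw [chainW_cons]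
      rw [List.map_cons] at h3
      have hnd := List.nodup_cons.mp h3
      have h2' : ∀ q ∈ pr, ¬ OccursIn q.2 (u ++ replaceD x p.1 p.2) := by
        intro q hq hocc
        rcases occursIn_append.mp hocc with hocc | hocc
        · exact h2 q (by simp [hq]) (occursIn_append.mpr (Or.inl hocc))
        · rcases occursIn_replaceD p.1 p.2 x hocc with heq | hocc
          · exact hnd.1 (heq ▸ List.mem_map.mpr ⟨q, hq, rfl⟩)
          · exact h2 q (by simp [hq]) (occursIn_append.mpr (Or.inr hocc))
      rw [ih (replaceD x p.1 p.2) (fun q hq => h1 q (by simp [hq])) h2' hnd.2]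
      exact step_nonvul f u x p.1 p.2 (h1 p (by simp))
        (safe_of_fresh p.1 p.2 (u ++ x) (h2 p (by simp)))

lemma exists_fresh_list [Infinite D] (S : Finset D) :
    ∀ k : ℕ, ∃ es : List D, es.length = k ∧ es.Nodup ∧ ∀ e ∈ es, e ∉ S := by
  intro k
  induction k with
  | zero => exact ⟨[], rfl, List.nodup_nil, by simp⟩
  | succ k ih =>
      obtain ⟨es, h1, h2, h3⟩ := ih
      obtain ⟨e, he⟩ := Infinite.exists_notMem_finset (S ∪ es.toFinset)
      simp only [Finset.mem_union, List.mem_toFinset, not_or] at he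
      exact ⟨e :: es, by simp [h1], List.nodup_cons.mpr ⟨he.2, h2⟩,
        by intro e' he'; rcases List.mem_cons.mp he' with rfl | h
           · exact he.1
           · exact h3 e' h⟩

end Aux

end SSRT

open SSRT

/-- Lemma 26: permuting a suffix without touching the
`f`-vulnerable values of the prefix does not change how it affects the prefix. -/
theorem nonVul_permutable_suffix
    {D A G : Type} [DecidableEq D] [Infinite D] [DecidableEq G]
    [Fintype A] [Fintype G]
    (f : Transduction A G D)
    (hperm : PermInvariant f) (hpeek : NoDataPeeking f)
    (u v : DataWord A D) (π : Equiv.Perm D)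
    (hπ : ∀ d : D, Vulnerable f d u → π d = d) :
    rightFac f u (permW π v) = rightFac f u v := by
  classical
  -- the data values of `v` that are moved by `π` (they are all non-vulnerable)
  set ds : List D := (v.map Prod.snd).dedup.filter (fun d => π d ≠ d) with hds
  -- all data values appearing anywhere relevant
  set S : Finset D := (u.map Prod.snd).toFinset ∪ (v.map Prod.snd).toFinset ∪
      ((permW π v).map Prod.snd).toFinset with hS
  obtain ⟨es, hlen, hnd, hfresh⟩ := exists_fresh_list S ds.length
  set pr1 : List (D × D) := ds.zip es with hpr1
  set pr2 : List (D × D) := (ds.map π).zip es with hpr2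
  have hds_mem : ∀ d ∈ ds, d ∈ v.map Prod.snd ∧ π d ≠ d := by
    intro d hd
    rw [hds, List.mem_filter] at hd
    exact ⟨List.mem_dedup.mp hd.1, by simpa using hd.2⟩
  have hes_notS : ∀ e ∈ es, e ∉ S := hfresh
  have hSu : ∀ c, c ∈ u.map Prod.snd → c ∈ S := fun c hc => by
    rw [hS]
    simp only [Finset.mem_union, List.mem_toFinset]
    exact Or.inl (Or.inl hc)
  have hSv : ∀ c, c ∈ v.map Prod.snd → c ∈ S := fun c hc => by
    rw [hS]
    simp only [Finset.mem_union, List.mem_toFinset]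
    exact Or.inl (Or.inr hc)
  have hSpv : ∀ c, c ∈ (permW π v).map Prod.snd → c ∈ S := fun c hc => by
    rw [hS]
    simp only [Finset.mem_union, List.mem_toFinset]
    exact Or.inr hc
  have hpv_mem : ∀ d ∈ ds, π d ∈ (permW π v).map Prod.snd := by
    intro d hd
    obtain ⟨hdv, _⟩ := hds_mem d hd
    obtain ⟨p, hp, rfl⟩ := List.mem_map.mp hdv
    exact List.mem_map.mpr ⟨(p.1, π p.2), List.mem_map.mpr ⟨p, hp, rfl⟩, rfl⟩
  -- snd components of the zips
  have hsnd1 : pr1.map Prod.snd = es := by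
    rw [hpr1]; exact List.map_snd_zip (le_of_eq hlen)
  have hsnd2 : pr2.map Prod.snd = es := by
    rw [hpr2]; exact List.map_snd_zip (by simp [hlen])
  -- Step 1: chaining pr1 on v does not change the right factorization
  have H1 : rightFac f u (chainW pr1 v) = rightFac f u v := by
    apply rightFac_chain f u pr1 v
    · intro p hp hvul
      obtain ⟨hp1, _⟩ := List.of_mem_zip hp
      exact (hds_mem p.1 hp1).2 (hπ p.1 hvul)
    · intro p hp hocc
      obtain ⟨_, hp2⟩ := List.of_mem_zip hp
      rcases occursIn_append.mp hocc with hocc | hocc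
      · exact hes_notS p.2 hp2 (hSu p.2 ((occursIn_iff _ _).mp hocc))
      · exact hes_notS p.2 hp2 (hSv p.2 ((occursIn_iff _ _).mp hocc))
    · rw [hsnd1]; exact hnd
  -- Step 2: chaining pr2 on (permW π v) does not change the right factorization
  have H2 : rightFac f u (chainW pr2 (permW π v)) = rightFac f u (permW π v) := by
    apply rightFac_chain f u pr2 (permW π v)
    · intro p hp hvul
      obtain ⟨hp1, _⟩ := List.of_mem_zip hp
      obtain ⟨d, hd, hde⟩ := List.mem_map.mp hp1
      rw [← hde] at hvul
      have := hπ (π d) hvul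
      exact (hds_mem d hd).2 (π.injective this)
    · intro p hp hocc
      obtain ⟨_, hp2⟩ := List.of_mem_zip hp
      rcases occursIn_append.mp hocc with hocc | hocc
      · exact hes_notS p.2 hp2 (hSu p.2 ((occursIn_iff _ _).mp hocc))
      · exact hes_notS p.2 hp2 (hSpv p.2 ((occursIn_iff _ _).mp hocc))
    · rw [hsnd2]; exact hnd
  -- Step 3: the two chained words coincide
  have H3 : chainW pr1 v = chainW pr2 (permW π v) := by
    rw [chainW_eq_map, chainW_eq_map, permW, List.map_map]
    apply List.map_congr_left
    intro q hq
    simp only [Function.comp]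
    congr 1
    apply chainV_perm π ds es hlen.symm
    · intro e he hed
      exact hes_notS e he (hSv e (hds_mem e hed).1)
    · intro e he d hd heq
      exact hes_notS e he (heq ▸ hSpv (π d) (hpv_mem d hd))
    · intro hq2
      by_contra hne
      exact hq2 (by
        rw [hds, List.mem_filter]
        exact ⟨List.mem_dedup.mpr (List.mem_map.mpr ⟨q, hq, rfl⟩), by simpa using hne⟩)
  rw [← H2, ← H3, H1]
end
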